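/- Let X be a locally compact metrizable space, D ⊆ X a compact set, and μ, (μ_m) finite Borel measures on X with μ_m → μ weak-*. Suppose D admits a finite cover by open balls B(x_1, t_1), …, B(x_q, t_q), and for each i there is a radius r_i < t_i with μ(S(x_i, r_i)) = 0, where S(x, r) denotes the metric sphere. Then limsup_{m→∞} μ_m(⋃_{i≤q} closure(B(x_i, r_i))) ≤ μ(⋃_{i≤q} closure(B(x_i, r_i))), provided that for every closed set F contained in one of the balls B(x_i, t_i) one has limsup_m μ_m(F) ≤ μ(F). -/

import Mathlib

open Filter Topology MeasureTheory Metric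

open scoped ENNReal

private lemma my_limsup_add_le (u v : ℕ → ℝ≥0∞) :
    limsup (fun n => u n + v n) atTop ≤ limsup u atTop + limsup v atTop := by
  rcases eq_or_ne (limsup u atTop) ⊤ with hu | hu
  · simp [hu]
  rcases eq_or_ne (limsup v atTop) ⊤ with hv | hv
  · simp [hv]
  refine ENNReal.le_of_forall_pos_le_add fun ε hε _ => ?_
  have hε' : (ε : ℝ≥0∞) ≠ 0 := by exact_mod_cast hε.ne'
  have h2 : (ε : ℝ≥0∞) / 2 ≠ 0 := by
    simp [ENNReal.div_eq_zero_iff, hε']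
  have hu' : ∀ᶠ n in atTop, u n < limsup u atTop + ε / 2 :=
    eventually_lt_of_limsup_lt (ENNReal.lt_add_right hu h2)
  have hv' : ∀ᶠ n in atTop, v n < limsup v atTop + ε / 2 :=
    eventually_lt_of_limsup_lt (ENNReal.lt_add_right hv h2)
  have : ∀ᶠ n in atTop, u n + v n ≤ limsup u atTop + limsup v atTop + ε := by
    filter_upwards [hu', hv'] with n h1 h2'
    calc u n + v n ≤ (limsup u atTop + ε / 2) + (limsup v atTop + ε / 2) :=
          add_le_add h1.le h2'.le
      _ = limsup u atTop + limsup v atTop + (ε / 2 + ε / 2) := by ring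
      _ = limsup u atTop + limsup v atTop + ε := by rw [ENNReal.add_halves]
  exact limsup_le_of_le (by isBoundedDefault) this

/-- Covering/portmanteau argument: if `μs m → μ` weak-*, `D` is compact covered by balls
`B(x i, t i)`, radii `r i < t i` are chosen with `μ`-null spheres `S(x i, r i)`, and
the limsup inequality holds for closed sets contained in one of the balls `B(x i, t i)`,
then `limsup μs m (⋃ i, closure B(x i, r i)) ≤ μ (⋃ i, closure B(x i, r i))`. -/
theorem limsup_measure_union_closure_balls_le
    {X : Type*} [MetricSpace X] [LocallyCompactSpace X]
    [MeasurableSpace X] [BorelSpace X]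
    (D : Set X) (hD : IsCompact D)
    (μs : ℕ → Measure X) (μ : Measure X)
    (hfin : ∀ m, IsFiniteMeasure (μs m)) (hfinμ : IsFiniteMeasure μ)
    (hconv : ∀ G : X → ℝ, Continuous G → HasCompactSupport G →
      Tendsto (fun m => ∫ x, G x ∂(μs m)) atTop (𝓝 (∫ x, G x ∂μ)))
    (q : ℕ) (x : Fin q → X) (t r : Fin q → ℝ)
    (hcover : D ⊆ ⋃ i, ball (x i) (t i))
    (hr : ∀ i, r i < t i)
    (hsphere : ∀ i, μ (sphere (x i) (r i)) = 0)
    (hclosed : ∀ F : Set X, IsClosed F → (∃ i, F ⊆ ball (x i) (t i)) →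
      limsup (fun m => μs m F) atTop ≤ μ F) :
    limsup (fun m => μs m (⋃ i, closure (ball (x i) (r i)))) atTop
      ≤ μ (⋃ i, closure (ball (x i) (r i))) := by
  -- Key claim by induction on finite sets of indices, with `closedBall` instead of `closure ball`.
  have key : ∀ s : Finset (Fin q),
      limsup (fun m => μs m (⋃ i ∈ s, closedBall (x i) (r i))) atTop
        ≤ μ (⋃ i ∈ s, closedBall (x i) (r i)) := by
    intro s
    induction s using Finset.induction_on with
    | empty =>
      simp
    | @insert a s ha ih =>
      set A : Set X := ⋃ i ∈ s, closedBall (x i) (r i) with hA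
      have hAclosed : IsClosed A :=
        Set.Finite.isClosed_biUnion s.finite_toSet (fun i _ => isClosed_closedBall)
      set C : Set X := closedBall (x a) (r a) \ interior A with hC
      have hCclosed : IsClosed C := IsClosed.sdiff isClosed_closedBall isOpen_interior
      have hunion : (⋃ i ∈ insert a s, closedBall (x i) (r i)) = A ∪ C := by
        rw [Finset.set_biUnion_insert]
        apply Set.Subset.antisymm
        · intro z hz
          rcases hz with hz | hz
          · by_cases hz' : z ∈ interior A
            · exact Or.inl (interior_subset hz')
            · exact Or.inr ⟨hz, hz'⟩
          · exact Or.inl hz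
        · intro z hz
          rcases hz with hz | hz
          · exact Or.inr hz
          · exact Or.inl hz.1
      -- the overlap is null
      have hball_sub : ∀ i : Fin q, i ∈ s → ball (x i) (r i) ⊆ interior A := by
        intro i hi
        apply interior_maximal _ isOpen_ball
        intro z hz
        exact Set.mem_biUnion hi (ball_subset_closedBall hz)
      have hnull : μ (A ∩ C) = 0 := by
        have hsub : A ∩ C ⊆ ⋃ i, sphere (x i) (r i) := by
          rintro z ⟨hzA, hzC⟩
          simp only [hA, Set.mem_iUnion] at hzA
          obtain ⟨i, hi, hzi⟩ := hzA
          have hznb : z ∉ ball (x i) (r i) := fun hzb => hzC.2 (hball_sub i hi hzb)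
          have : dist z (x i) = r i :=
            le_antisymm (mem_closedBall.mp hzi) (not_lt.mp (fun h => hznb (mem_ball.mpr h)))
          exact Set.mem_iUnion.mpr ⟨i, this⟩
        exact measure_mono_null hsub (measure_iUnion_null hsphere)
      have hCle : limsup (fun m => μs m C) atTop ≤ μ C := by
        apply hclosed C hCclosed
        exact ⟨a, (Set.diff_subset).trans (closedBall_subset_ball (hr a))⟩
      calc limsup (fun m => μs m (⋃ i ∈ insert a s, closedBall (x i) (r i))) atTop
          = limsup (fun m => μs m (A ∪ C)) atTop := by rw [hunion]
        _ ≤ limsup (fun m => μs m A + μs m C) atTop := by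
            apply limsup_le_limsup (Eventually.of_forall fun m => ?_)
            exact measure_union_le A C
        _ ≤ limsup (fun m => μs m A) atTop + limsup (fun m => μs m C) atTop :=
            my_limsup_add_le _ _
        _ ≤ μ A + μ C := add_le_add ih hCle
        _ = μ (A ∪ C) + μ (A ∩ C) :=
            (measure_union_add_inter' hAclosed.measurableSet C).symm
        _ = μ (A ∪ C) := by rw [hnull, add_zero]
        _ = μ (⋃ i ∈ insert a s, closedBall (x i) (r i)) := by rw [hunion]
  have h1 : limsup (fun m => μs m (⋃ i, closure (ball (x i) (r i)))) atTop
      ≤ limsup (fun m => μs m (⋃ i ∈ (Finset.univ : Finset (Fin q)), closedBall (x i) (r i)))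
        atTop := by
    apply limsup_le_limsup (Eventually.of_forall fun m => ?_)
    apply measure_mono
    simp only [Finset.mem_univ, Set.iUnion_true]
    exact Set.iUnion_mono fun i => closure_ball_subset_closedBall
  refine (h1.trans (key Finset.univ)).trans ?_
  -- μ(⋃ closedBall) ≤ μ(⋃ closure ball)
  have h2 : (⋃ i ∈ (Finset.univ : Finset (Fin q)), closedBall (x i) (r i))
      ⊆ (⋃ i, closure (ball (x i) (r i))) ∪ ⋃ i, sphere (x i) (r i) := by
    simp only [Finset.mem_univ, Set.iUnion_true]
    intro z hz
    obtain ⟨i, hi⟩ := Set.mem_iUnion.mp hz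
    by_cases hb : z ∈ ball (x i) (r i)
    · exact Or.inl (Set.mem_iUnion.mpr ⟨i, subset_closure hb⟩)
    · have : dist z (x i) = r i :=
        le_antisymm (mem_closedBall.mp hi) (not_lt.mp fun h => hb (mem_ball.mpr h))
      exact Or.inr (Set.mem_iUnion.mpr ⟨i, this⟩)
  calc μ (⋃ i ∈ (Finset.univ : Finset (Fin q)), closedBall (x i) (r i))
      ≤ μ ((⋃ i, closure (ball (x i) (r i))) ∪ ⋃ i, sphere (x i) (r i)) := measure_mono h2
    _ ≤ μ (⋃ i, closure (ball (x i) (r i))) + μ (⋃ i, sphere (x i) (r i)) := measure_union_le _ _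
    _ = μ (⋃ i, closure (ball (x i) (r i))) := by rw [measure_iUnion_null hsphere, add_zero]
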